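/- Fix constants α, β > 0, c₁, c₂ > 0, t > 0 and s' ∈ (0,t]. Let P : [0,s'] → ℝ³ be bounded measurable, let k : [0,s'] → ℝ³ be measurable with |k(σ)| = 1 for a.e. σ, let n ∈ ℝ³ and c ∈ ℝ. For ω ∈ L²([0,s'];ℝ³), write ω(σ) = ω^{twist}(σ) + ω^{bend}(σ), where ω^{twist}(σ) = ⟨ω(σ),k(σ)⟩ k(σ) and ω^{bend}(σ) = ω(σ) − ω^{twist}(σ). Suppose ω̄ minimizes the energy E(ω) = ½ ∫₀^{s'} (1 − e^{−α(t−σ)}) e^{β(t−σ)} ( c₁ |ω^{twist}(σ)|² + c₂ |ω^{bend}(σ)|² ) dσ among all ω ∈ L²([0,s'];ℝ³) satisfying the linear constraint ⟨ n , ∫₀^{s'} (1 − e^{−α(t−σ)}) ω(σ) × (P(s') − P(σ)) dσ ⟩ + c = 0, and assume the constraint functional is not identically zero on L². Then there exists λ ∈ ℝ such that for a.e. σ ∈ (0,s'): ω̄^{twist}(σ) = (λ/c₁) e^{−β(t−σ)} ( n × (P(s') − P(σ)) )^{twist} and ω̄^{bend}(σ) = (λ/c₂) e^{−β(t−σ)}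 ( n × (P(s') − P(σ)) )^{bend}, where for a vector v ∈ ℝ³ one sets v^{twist} = ⟨v,k(σ)⟩ k(σ) and v^{bend} = v − v^{twist}. -/

import Mathlib

open MeasureTheory Set Classical
noncomputable section

/-- Three-dimensional Euclidean space. -/
abbrev E3 : Type := EuclideanSpace ℝ (Fin 3)

/-- The cross product on `ℝ³`. -/
def cross (u v : E3) : E3 :=
  WithLp.toLp 2 ![u 1 * v 2 - u 2 * v 1, u 2 * v 0 - u 0 * v 2, u 0 * v 1 - u 1 * v 0]

/-- The Euclidean inner product on `ℝ³`. -/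
def rinner (u v : E3) : ℝ := inner ℝ u v

/-- The signed distance to the boundary of `Ω`: negative inside `Ω`, positive outside. -/
def signedDistE3 (Ω : Set E3) (x : E3) : ℝ :=
  if x ∈ Ω then -(Metric.infDist x (frontier Ω)) else Metric.infDist x (frontier Ω)

/-- The (unit) outer normal to `Ω`, i.e. the gradient of the signed distance. -/
def outerNormal (Ω : Set E3) (x : E3) : E3 := gradient (signedDistE3 Ω) x

/-- The set `Ω` has boundary of class `C^k`: near every boundary point, `Ω` is the sublevel
set of a `C^k` defining function with nonvanishing gradient. -/
def HasCkBoundary (Ω : Set E3) (k : ℕ∞) : Prop :=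
  ∀ x ∈ frontier Ω, ∃ (U : Set E3) (f : E3 → ℝ), IsOpen U ∧ x ∈ U ∧
    ContDiffOn ℝ k f U ∧ (∀ y ∈ U, gradient f y ≠ 0) ∧
    Ω ∩ U = {y ∈ U | f y < 0} ∧ frontier Ω ∩ U = {y ∈ U | f y = 0}

/-- `γ`, together with its derivative `γd` and second derivative `γdd`, is a curve of Sobolev
class `H²` on `[0,T]`: `γ` and `γd` are absolutely continuous with the stated derivatives,
and `γdd` is square integrable. -/
def IsH2Curve (T : ℝ) (γ γd γdd : ℝ → E3) : Prop :=
  (∀ s ∈ Icc (0:ℝ) T, γ s = γ 0 + ∫ σ in (0:ℝ)..s, γd σ) ∧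
  (∀ s ∈ Icc (0:ℝ) T, γd s = γd 0 + ∫ σ in (0:ℝ)..s, γdd σ) ∧
  MemLp γdd 2 (volume.restrict (Icc (0:ℝ) T))

/-- The `L²` norm of `ω` on `[0,T]`. -/
def L2norm (T : ℝ) (ω : ℝ → E3) : ℝ := Real.sqrt (∫ s in (0:ℝ)..T, ‖ω s‖ ^ 2)

/-- The `H²` norm of a curve on `[0,T]` (given together with its two derivatives). -/
def H2norm (T : ℝ) (v vd vdd : ℝ → E3) : ℝ :=
  Real.sqrt ((∫ s in (0:ℝ)..T, ‖v s‖ ^ 2) + (∫ s in (0:ℝ)..T, ‖vd s‖ ^ 2) +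
    (∫ s in (0:ℝ)..T, ‖vdd s‖ ^ 2))

/-- Membership in the tube `V_ρ` around the (extended) initial curve `γ₀`:
`γ(0) = 0`, `γ'(0) = γ₀'(0)`, `|γ'| ≡ 1` on `[0,T]`, and `∫₀^T |γ'' − γ₀''|² ≤ ρ`. -/
def InTube (T ρ : ℝ) (γ₀d0 : E3) (γ₀dd : ℝ → E3) (γ γd γdd : ℝ → E3) : Prop :=
  IsH2Curve T γ γd γdd ∧ γ 0 = 0 ∧ γd 0 = γ₀d0 ∧
  (∀ s ∈ Icc (0:ℝ) T, ‖γd s‖ = 1) ∧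
  (∫ s in (0:ℝ)..T, ‖γdd s - γ₀dd s‖ ^ 2) ≤ ρ

/-- The second derivative of the curve `γ₀` extended linearly beyond `t₀`. -/
def extendSecond (t₀ : ℝ) (γ₀dd : ℝ → E3) : ℝ → E3 :=
  fun s => if s ≤ t₀ then γ₀dd s else 0

/-- The rotated curve `γ_ω(s) = γ(s) + ∫₀^s ω(σ) × (γ(s) − γ(σ)) dσ`. -/
def rotCurve (γ ω : ℝ → E3) (s : ℝ) : E3 :=
  γ s + ∫ σ in (0:ℝ)..s, cross (ω σ) (γ s - γ σ)

/-- The elastic cost `J(ω) = ∫₀^T e^{β(t−s)} |ω(s)|² ds`. -/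
def Jcost (β t T : ℝ) (ω : ℝ → E3) : ℝ :=
  ∫ s in (0:ℝ)..T, Real.exp (β * (t - s)) * ‖ω s‖ ^ 2

/-- The maximal depth `E(t,γ,Ω)` at which `γ|_{[0,t]}` penetrates inside `Ω` (zero if it
does not enter `Ω`). -/
def penDepth (t : ℝ) (γ : ℝ → E3) (Ω : Set E3) : ℝ :=
  sSup (insert 0 {d | ∃ s ∈ Icc (0:ℝ) t, γ s ∈ Ω ∧ d = Metric.infDist (γ s) (frontier Ω)})

/-- The breakdown configuration (B): the tip touches the obstacle perpendicularly, and the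
curve is straight (a.e.) wherever it does not touch the boundary. -/
def Breakdown (Ω : Set E3) (t₀ : ℝ) (γ γd γdd : ℝ → E3) : Prop :=
  γ t₀ ∈ frontier Ω ∧ γd t₀ = - outerNormal Ω (γ t₀) ∧
  (∀ᵐ s : ℝ, s ∈ Ioo (0:ℝ) t₀ → γ s ∉ frontier Ω → γdd s = 0)

/-- The linear map `v ↦ w × v`. -/
def crossLM (w : E3) : E3 →ₗ[ℝ] E3 where
  toFun v := cross w v
  map_add' a b := by
    ext i
    fin_cases i <;> simp [cross, PiLp.add_apply] <;> ring
  map_smul' c a := by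
    ext i
    fin_cases i <;> simp [cross, PiLp.smul_apply, smul_eq_mul] <;> ring

/-- The continuous linear map `A(w) : v ↦ w × v`. -/
def crossCLM (w : E3) : E3 →L[ℝ] E3 := LinearMap.toContinuousLinearMap (crossLM w)

/-- The rotation `R[w] = exp(A(w))`, where `A(w)v = w × v`. -/
def rotOf (w : E3) : E3 →L[ℝ] E3 := NormedSpace.exp (crossCLM w)

set_option maxHeartbeats 1000000

lemma rinner_eq (u v : E3) : rinner u v = u 0 * v 0 + u 1 * v 1 + u 2 * v 2 := by
  simp [rinner, PiLp.inner_apply, Fin.sum_univ_three, RCLike.inner_apply, mul_comm]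

lemma cross_apply0 (u v : E3) : cross u v 0 = u 1 * v 2 - u 2 * v 1 := rfl
lemma cross_apply1 (u v : E3) : cross u v 1 = u 2 * v 0 - u 0 * v 2 := rfl
lemma cross_apply2 (u v : E3) : cross u v 2 = u 0 * v 1 - u 1 * v 0 := rfl

lemma triple_cyc (n u p : E3) : rinner n (cross u p) = rinner u (cross p n) := by
  simp only [rinner_eq, cross_apply0, cross_apply1, cross_apply2]; ring

lemma cross_swap (u v : E3) : cross u v = - cross v u := by
  ext i; fin_cases i <;> simp [cross, PiLp.neg_apply] <;> ring

lemma abs_coord_le (u : E3) (i : Fin 3) : |u i| ≤ ‖u‖ := by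
  rw [EuclideanSpace.norm_eq, ← Real.sqrt_sq_eq_abs]
  apply Real.sqrt_le_sqrt
  have := Finset.single_le_sum (f := fun j => u j ^ 2) (fun j _ => sq_nonneg _) (Finset.mem_univ i)
  simpa [Real.norm_eq_abs, sq_abs] using this

lemma coord_sq_le (u : E3) (i : Fin 3) : u i ^ 2 ≤ ‖u‖ ^ 2 := by
  have h := abs_coord_le u i
  nlinarith [abs_nonneg (u i), sq_abs (u i)]

lemma cross_norm_le (u v : E3) : ‖cross u v‖ ≤ 4 * ‖u‖ * ‖v‖ := by
  have h : ∀ (a b : Fin 3), (u a * v b) ^ 2 ≤ ‖u‖ ^ 2 * ‖v‖ ^ 2 := by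
    intro a b
    calc (u a * v b) ^ 2 = u a ^ 2 * v b ^ 2 := by ring
    _ ≤ ‖u‖ ^ 2 * ‖v‖ ^ 2 :=
      mul_le_mul (coord_sq_le u a) (coord_sq_le v b) (sq_nonneg _) (sq_nonneg _)
  rw [EuclideanSpace.norm_eq, Fin.sum_univ_three]
  have h4 : 0 ≤ 4 * ‖u‖ * ‖v‖ := by positivity
  rw [← Real.sqrt_sq h4]
  apply Real.sqrt_le_sqrt
  simp only [cross_apply0, cross_apply1, cross_apply2, Real.norm_eq_abs, sq_abs]
  nlinarith [h 1 2, h 2 1, h 2 0, h 0 2, h 0 1, h 1 0, sq_nonneg (u 1 * v 2 + u 2 * v 1),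
    sq_nonneg (u 2 * v 0 + u 0 * v 2), sq_nonneg (u 0 * v 1 + u 1 * v 0),
    mul_nonneg (mul_nonneg (norm_nonneg u) (norm_nonneg u))
      (mul_nonneg (norm_nonneg v) (norm_nonneg v))]

lemma measurable_cross2 {f g : ℝ → E3} (hf : Measurable f) (hg : Measurable g) :
    Measurable fun σ => cross (f σ) (g σ) := by
  have hfi : ∀ i : Fin 3, Measurable fun σ => f σ i := fun i =>
    (EuclideanSpace.proj (𝕜 := ℝ) i).continuous.measurable.comp hf
  have hgi : ∀ i : Fin 3, Measurable fun σ => g σ i := fun i =>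
    (EuclideanSpace.proj (𝕜 := ℝ) i).continuous.measurable.comp hg
  have hm : Measurable fun σ => (![f σ 1 * g σ 2 - f σ 2 * g σ 1, f σ 2 * g σ 0 - f σ 0 * g σ 2,
      f σ 0 * g σ 1 - f σ 1 * g σ 0] : Fin 3 → ℝ) :=
    measurable_pi_lambda _ (fun i => by
    fin_cases i <;>
      simp only [Matrix.cons_val_zero, Matrix.cons_val_one, Matrix.head_cons,
        Matrix.cons_val_two, Matrix.tail_cons] <;>
      exact ((hfi _).mul (hgi _)).sub ((hfi _).mul (hgi _)))
  exact (PiLp.continuous_toLp 2 (fun _ : Fin 3 => ℝ)).measurable.comp hm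

lemma aemeasurable_cross {ν : Measure ℝ} {f g : ℝ → E3} (hf : AEMeasurable f ν)
    (hg : AEMeasurable g ν) : AEMeasurable (fun σ => cross (f σ) (g σ)) ν := by
  refine ⟨fun σ => cross (hf.mk f σ) (hg.mk g σ),
    measurable_cross2 hf.measurable_mk hg.measurable_mk, ?_⟩
  filter_upwards [hf.ae_eq_mk, hg.ae_eq_mk] with σ h1 h2
  rw [h1, h2]

lemma aesm_cross {ν : Measure ℝ} {f g : ℝ → E3} (hf : AEStronglyMeasurable f ν)
    (hg : AEStronglyMeasurable g ν) :
    AEStronglyMeasurable (fun σ => cross (f σ) (g σ)) ν :=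
  (aemeasurable_cross hf.aemeasurable hg.aemeasurable).aestronglyMeasurable

lemma rinner_comm (u v : E3) : rinner u v = rinner v u := real_inner_comm v u
lemma normsq_smulk (k : E3) (hk : ‖k‖ = 1) (a : ℝ) : ‖a • k‖ ^ 2 = a ^ 2 := by
  rw [norm_smul, hk]; simp [sq_abs]
lemma rinner_self (x : E3) : rinner x x = ‖x‖ ^ 2 := real_inner_self_eq_norm_sq x
lemma normsq_sub_proj (k x : E3) (hk : ‖k‖ = 1) :
    ‖x - rinner x k • k‖ ^ 2 = rinner x x - rinner x k ^ 2 := by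
  have hkk : rinner k k = 1 := by rw [rinner_self, hk]; norm_num
  rw [← rinner_self]
  simp only [rinner, inner_sub_sub_self, real_inner_smul_left, real_inner_smul_right]
  rw [show (inner ℝ k k : ℝ) = 1 from hkk, real_inner_comm k x]
  ring

lemma rinner_add_left' (x y z : E3) : rinner (x + y) z = rinner x z + rinner y z :=
  inner_add_left x y z
lemma rinner_smul_left' (a : ℝ) (x z : E3) : rinner (a • x) z = a * rinner x z :=
  real_inner_smul_left x z a

lemma expand_pt (c₁ c₂ w ε : ℝ) (k ω η : E3) (hk : ‖k‖ = 1) :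
    w * (c₁ * ‖rinner (ω + ε • η) k • k‖ ^ 2 + c₂ * ‖(ω + ε • η) - rinner (ω + ε • η) k • k‖ ^ 2)
    = w * (c₁ * ‖rinner ω k • k‖ ^ 2 + c₂ * ‖ω - rinner ω k • k‖ ^ 2)
    + ε * (2 * rinner (w • (c₂ • ω + ((c₁ - c₂) * rinner ω k) • k)) η)
    + ε ^ 2 * (w * (c₁ * ‖rinner η k • k‖ ^ 2 + c₂ * ‖η - rinner η k • k‖ ^ 2)) := by
  have hkk : rinner k k = 1 := by rw [rinner_self, hk]; norm_num
  have e1 : rinner (ω + ε • η) k = rinner ω k + ε * rinner η k := by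
    rw [rinner_add_left', rinner_smul_left']
  have e2 : rinner (ω + ε • η) (ω + ε • η)
      = rinner ω ω + 2 * ε * rinner ω η + ε ^ 2 * rinner η η := by
    simp only [rinner, inner_add_left, inner_add_right, real_inner_smul_left,
      real_inner_smul_right]
    rw [real_inner_comm η ω]; ring
  have e3 : rinner (w • (c₂ • ω + ((c₁ - c₂) * rinner ω k) • k)) η
      = w * (c₂ * rinner ω η + (c₁ - c₂) * rinner ω k * rinner k η) := by
    simp only [rinner, real_inner_smul_left, inner_add_left]
  rw [normsq_smulk k hk, normsq_smulk k hk, normsq_smulk k hk,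
    normsq_sub_proj k _ hk, normsq_sub_proj k _ hk, normsq_sub_proj k _ hk,
    e1, e2, e3, rinner_comm k η]
  ring

lemma inner_integrable' {ν : Measure ℝ} {f g : ℝ → E3} (hf : MemLp f 2 ν)
    (hg : MemLp g 2 ν) : Integrable (fun σ => rinner (f σ) (g σ)) ν := by
  have h := MeasureTheory.L2.integrable_inner (𝕜 := ℝ) (hf.toLp f) (hg.toLp g)
  refine h.congr ?_
  filter_upwards [hf.coeFn_toLp, hg.coeFn_toLp] with σ h1 h2
  rw [rinner, h1, h2]

lemma memℒp_of_bound {ν : Measure ℝ} [IsFiniteMeasure ν] {f : ℝ → E3}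
    (hm : AEStronglyMeasurable f ν) (C : ℝ) (h : ∀ᵐ σ ∂ν, ‖f σ‖ ≤ C) : MemLp f 2 ν :=
  MemLp.of_le (memLp_const C) hm (h.mono fun σ hσ => by
    simpa [Real.norm_eq_abs] using hσ.trans (le_abs_self C))

lemma zero_of_quad (a b : ℝ) (hb : 0 ≤ b) (h : ∀ ε : ℝ, 0 ≤ ε * a + ε ^ 2 * b) : a = 0 := by
  by_contra ha
  have hd : (0:ℝ) < 2 * b + 1 := by linarith
  have h' := h (-a / (2 * b + 1))
  rw [div_mul_eq_mul_div, div_pow, div_mul_eq_mul_div, div_add_div _ _ (ne_of_gt hd)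
    (ne_of_gt (by positivity : (0:ℝ) < (2*b+1)^2)), le_div_iff₀ (by positivity)] at h'
  have ha2 : 0 < a ^ 2 := by positivity
  nlinarith [sq_nonneg a, sq_nonneg (a*b)]

/-- Lagrange-multiplier necessary conditions for the minimizer of the elastic
energy penalizing twisting and bending with different weights `c₁, c₂`. -/
theorem twist_bend_necessary_conditions
    (α β c₁ c₂ t s' : ℝ) (hα : 0 < α) (hβ : 0 < β) (hc₁ : 0 < c₁) (hc₂ : 0 < c₂)
    (ht : 0 < t) (hs' : s' ∈ Ioc (0:ℝ) t)
    (P : ℝ → E3) (hPm : Measurable P) (hPb : ∃ C : ℝ, ∀ σ ∈ Icc (0:ℝ) s', ‖P σ‖ ≤ C)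
    (k : ℝ → E3) (hkm : Measurable k) (hk : ∀ᵐ σ : ℝ, σ ∈ Icc (0:ℝ) s' → ‖k σ‖ = 1)
    (n : E3) (c : ℝ)
    (En : (ℝ → E3) → ℝ)
    (hEn : ∀ ω : ℝ → E3, En ω = (1/2) * ∫ σ in (0:ℝ)..s',
        (1 - Real.exp (-(α * (t - σ)))) * Real.exp (β * (t - σ)) *
          (c₁ * ‖rinner (ω σ) (k σ) • k σ‖ ^ 2 +
            c₂ * ‖ω σ - rinner (ω σ) (k σ) • k σ‖ ^ 2))
    (Con : (ℝ → E3) → ℝ)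
    (hCon : ∀ ω : ℝ → E3, Con ω = rinner n (∫ σ in (0:ℝ)..s',
        (1 - Real.exp (-(α * (t - σ)))) • cross (ω σ) (P s' - P σ)) + c)
    (hnontriv : ∃ ω₀ : ℝ → E3,
        MemLp ω₀ 2 (volume.restrict (Icc (0:ℝ) s')) ∧ Con ω₀ ≠ c)
    (ωbar : ℝ → E3) (hωbar : MemLp ωbar 2 (volume.restrict (Icc (0:ℝ) s')))
    (hfeas : Con ωbar = 0)
    (hmin : ∀ ω : ℝ → E3, MemLp ω 2 (volume.restrict (Icc (0:ℝ) s')) →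
        Con ω = 0 → En ωbar ≤ En ω) :
    ∃ lam : ℝ, ∀ᵐ σ : ℝ, σ ∈ Ioo (0:ℝ) s' →
      rinner (ωbar σ) (k σ) • k σ =
        (lam / c₁) • (Real.exp (-(β * (t - σ))) •
          (rinner (cross n (P s' - P σ)) (k σ) • k σ)) ∧
      ωbar σ - rinner (ωbar σ) (k σ) • k σ =
        (lam / c₂) • (Real.exp (-(β * (t - σ))) •
          (cross n (P s' - P σ) - rinner (cross n (P s' - P σ)) (k σ) • k σ)) := by
  obtain ⟨hs0, hst⟩ := hs'
  obtain ⟨C₀, hC₀⟩ := hPb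
  set CP := max C₀ 0 with hCP
  have hCP0 : 0 ≤ CP := le_max_right _ _
  have hPbd : ∀ σ ∈ Icc (0:ℝ) s', ‖P σ‖ ≤ CP := fun σ hσ => (hC₀ σ hσ).trans (le_max_left _ _)
  set e₁ : ℝ → ℝ := fun σ => 1 - Real.exp (-(α * (t - σ))) with he₁
  set wf : ℝ → ℝ := fun σ => (1 - Real.exp (-(α * (t - σ)))) * Real.exp (β * (t - σ)) with hwf
  set pf : ℝ → E3 := fun σ => P s' - P σ with hpf
  set q : ℝ → E3 := fun σ => e₁ σ • cross (pf σ) n with hqdef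
  set G : (ℝ → E3) → ℝ → E3 :=
    fun ω σ => wf σ • (c₂ • ω σ + ((c₁ - c₂) * rinner (ω σ) (k σ)) • k σ) with hGdef
  set fI : (ℝ → E3) → ℝ → ℝ := fun ω σ => wf σ *
      (c₁ * ‖rinner (ω σ) (k σ) • k σ‖ ^ 2 +
        c₂ * ‖ω σ - rinner (ω σ) (k σ) • k σ‖ ^ 2) with hfIdef
  have hsub : Ioc (0:ℝ) s' ⊆ Icc 0 s' := Ioc_subset_Icc_self
  have hle : volume.restrict (Ioc (0:ℝ) s') ≤ volume.restrict (Icc (0:ℝ) s') :=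
    Measure.restrict_mono hsub le_rfl
  haveI hfinI : IsFiniteMeasure (volume.restrict (Icc (0:ℝ) s')) :=
    ⟨by rw [Measure.restrict_apply_univ]; exact measure_Icc_lt_top⟩
  haveI hfinO : IsFiniteMeasure (volume.restrict (Ioc (0:ℝ) s')) :=
    ⟨by rw [Measure.restrict_apply_univ]; exact measure_Ioc_lt_top⟩
  have hkI : ∀ᵐ σ ∂(volume.restrict (Icc (0:ℝ) s')), ‖k σ‖ = 1 := by
    filter_upwards [ae_restrict_mem measurableSet_Icc, ae_restrict_of_ae hk] with σ h1 h2
    exact h2 h1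
  have hkO : ∀ᵐ σ ∂(volume.restrict (Ioc (0:ℝ) s')), ‖k σ‖ = 1 :=
    hkI.filter_mono (ae_mono hle)
  -- bounds for the scalar weights
  have he₁bd : ∀ σ ∈ Icc (0:ℝ) s', 0 ≤ e₁ σ ∧ e₁ σ ≤ 1 := by
    intro σ hσ
    have hts : 0 ≤ t - σ := by linarith [hσ.2]
    have h1 : Real.exp (-(α * (t - σ))) ≤ 1 := Real.exp_le_one_iff.mpr (by nlinarith [hα.le])
    have h2 : 0 < Real.exp (-(α * (t - σ))) := Real.exp_pos _
    simp only [he₁]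
    constructor <;> linarith
  have hwf_bd : ∀ σ ∈ Icc (0:ℝ) s', 0 ≤ wf σ ∧ wf σ ≤ Real.exp (β * t) := by
    intro σ hσ
    have h1 := he₁bd σ hσ
    simp only [he₁] at h1
    have h2 : 0 < Real.exp (β * (t - σ)) := Real.exp_pos _
    have h3 : Real.exp (β * (t - σ)) ≤ Real.exp (β * t) :=
      Real.exp_le_exp.mpr (by nlinarith [hσ.1, hβ.le])
    simp only [hwf]
    constructor
    · nlinarith
    · nlinarith [Real.exp_pos (β * t)]
  have hpbd : ∀ σ ∈ Icc (0:ℝ) s', ‖pf σ‖ ≤ 2 * CP := by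
    intro σ hσ
    have h1 := hPbd σ hσ
    have h2 := hPbd s' ⟨hs0.le, le_refl s'⟩
    simp only [hpf]
    calc ‖P s' - P σ‖ ≤ ‖P s'‖ + ‖P σ‖ := norm_sub_le _ _
      _ ≤ 2 * CP := by linarith
  -- continuity / measurability
  have he₁c : Continuous e₁ := by
    rw [he₁]; fun_prop
  have hwfc : Continuous wf := by
    rw [hwf]; fun_prop
  have hpm : Measurable pf := by rw [hpf]; exact measurable_const.sub hPm
  have hq_aesm : ∀ ν : Measure ℝ, AEStronglyMeasurable q ν := by
    intro ν
    rw [hqdef]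
    exact (he₁c.aestronglyMeasurable).smul
      (aesm_cross hpm.aestronglyMeasurable aestronglyMeasurable_const)
  have hq2I : MemLp q 2 (volume.restrict (Icc (0:ℝ) s')) := by
    refine memℒp_of_bound (hq_aesm _) (4 * (2 * CP) * ‖n‖) ?_
    filter_upwards [ae_restrict_mem measurableSet_Icc] with σ hσ
    have h1 : |e₁ σ| ≤ 1 := abs_le.mpr ⟨by linarith [(he₁bd σ hσ).1], (he₁bd σ hσ).2⟩
    have h2 : ‖cross (pf σ) n‖ ≤ 4 * (2 * CP) * ‖n‖ := by
      refine (cross_norm_le _ _).trans ?_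
      have := hpbd σ hσ
      nlinarith [norm_nonneg n, norm_nonneg (pf σ)]
    calc ‖q σ‖ = |e₁ σ| * ‖cross (pf σ) n‖ := by
          rw [hqdef]; rw [norm_smul, Real.norm_eq_abs]
      _ ≤ 1 * (4 * (2 * CP) * ‖n‖) :=
          mul_le_mul h1 h2 (norm_nonneg _) zero_le_one
      _ = 4 * (2 * CP) * ‖n‖ := one_mul _
  -- G is L² with norm ≤ KG * ‖ω‖
  have hG_aesm : ∀ (ω : ℝ → E3) (ν : Measure ℝ), AEStronglyMeasurable ω ν →
      AEStronglyMeasurable (G ω) ν := by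
    intro ω ν hω
    rw [hGdef]
    exact (hwfc.aestronglyMeasurable).smul ((hω.const_smul c₂).add
      (((hω.inner hkm.aestronglyMeasurable).const_mul (c₁ - c₂)).smul hkm.aestronglyMeasurable))
  have hG2I : ∀ ω : ℝ → E3, MemLp ω 2 (volume.restrict (Icc (0:ℝ) s')) →
      MemLp (G ω) 2 (volume.restrict (Icc (0:ℝ) s')) := by
    intro ω hω
    refine MemLp.of_le (hω.norm.const_mul (Real.exp (β * t) * (c₂ + |c₁ - c₂|)))
      (hG_aesm ω _ hω.aestronglyMeasurable) ?_
    filter_upwards [ae_restrict_mem measurableSet_Icc, hkI] with σ hσ hks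
    have h1 := hwf_bd σ hσ
    have h2 : |rinner (ω σ) (k σ)| ≤ ‖ω σ‖ := by
      rw [rinner]
      calc |(inner ℝ (ω σ) (k σ) : ℝ)| ≤ ‖ω σ‖ * ‖k σ‖ := abs_real_inner_le_norm _ _
        _ = ‖ω σ‖ := by rw [hks, mul_one]
    have h3 : ‖c₂ • ω σ + ((c₁ - c₂) * rinner (ω σ) (k σ)) • k σ‖
        ≤ c₂ * ‖ω σ‖ + |c₁ - c₂| * ‖ω σ‖ := by
      refine (norm_add_le _ _).trans ?_
      rw [norm_smul, norm_smul, hks, mul_one, Real.norm_eq_abs, Real.norm_eq_abs,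
        abs_of_pos hc₂, abs_mul]
      have h4 := mul_le_mul_of_nonneg_left h2 (abs_nonneg (c₁ - c₂))
      linarith
    have hb : ‖G ω σ‖ ≤ Real.exp (β * t) * (c₂ + |c₁ - c₂|) * ‖ω σ‖ := by
      rw [hGdef]
      calc ‖wf σ • (c₂ • ω σ + ((c₁ - c₂) * rinner (ω σ) (k σ)) • k σ)‖
          = |wf σ| * ‖c₂ • ω σ + ((c₁ - c₂) * rinner (ω σ) (k σ)) • k σ‖ := by
            rw [norm_smul, Real.norm_eq_abs]
        _ ≤ Real.exp (β * t) * (c₂ * ‖ω σ‖ + |c₁ - c₂| * ‖ω σ‖) := by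
            rw [abs_of_nonneg h1.1]
            have hnn : 0 ≤ ‖c₂ • ω σ + ((c₁ - c₂) * rinner (ω σ) (k σ)) • k σ‖ :=
              norm_nonneg _
            nlinarith [norm_nonneg (ω σ), abs_nonneg (c₁ - c₂), Real.exp_pos (β * t)]
        _ = Real.exp (β * t) * (c₂ + |c₁ - c₂|) * ‖ω σ‖ := by ring
    refine hb.trans ?_
    rw [Real.norm_eq_abs]
    exact le_abs_self _
  -- integrability of the energy integrand
  have hfI_int : ∀ ω : ℝ → E3, MemLp ω 2 (volume.restrict (Icc (0:ℝ) s')) →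
      Integrable (fI ω) (volume.restrict (Ioc (0:ℝ) s')) := by
    intro ω hω
    have hωO := hω.mono_measure hle
    have hg : Integrable (fun σ => (Real.exp (β * t) * (c₁ + 4 * c₂)) * ‖ω σ‖ ^ 2)
        (volume.restrict (Ioc (0:ℝ) s')) := (hωO.norm.integrable_sq).const_mul _
    refine hg.mono' ?_ ?_
    · rw [hfIdef]
      have hA : AEStronglyMeasurable (fun σ => rinner (ω σ) (k σ) • k σ)
          (volume.restrict (Ioc (0:ℝ) s')) :=
        ((hωO.aestronglyMeasurable.inner (𝕜 := ℝ) hkm.aestronglyMeasurable)).smul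
          hkm.aestronglyMeasurable
      exact (hwfc.aestronglyMeasurable).mul
        ((((continuous_pow 2).comp_aestronglyMeasurable hA.norm).const_mul c₁).add
          (((continuous_pow 2).comp_aestronglyMeasurable
            (hωO.aestronglyMeasurable.sub hA).norm).const_mul c₂))
    · filter_upwards [ae_restrict_mem measurableSet_Ioc, hkO] with σ hσ hks
      have h1 := hwf_bd σ (hsub hσ)
      have h2 : |rinner (ω σ) (k σ)| ≤ ‖ω σ‖ := by
        rw [rinner]
        calc |(inner ℝ (ω σ) (k σ) : ℝ)| ≤ ‖ω σ‖ * ‖k σ‖ := abs_real_inner_le_norm _ _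
          _ = ‖ω σ‖ := by rw [hks, mul_one]
      have hx : ‖rinner (ω σ) (k σ) • k σ‖ ≤ ‖ω σ‖ := by
        rw [norm_smul, hks, mul_one, Real.norm_eq_abs]; exact h2
      have hy : ‖ω σ - rinner (ω σ) (k σ) • k σ‖ ≤ 2 * ‖ω σ‖ := by
        refine (norm_sub_le _ _).trans ?_
        linarith [hx]
      have hnn : 0 ≤ fI ω σ := by
        rw [hfIdef]
        exact mul_nonneg h1.1 (by positivity)
      rw [Real.norm_eq_abs, abs_of_nonneg hnn]
      simp only [hfIdef]
      have hx2 : ‖rinner (ω σ) (k σ) • k σ‖ ^ 2 ≤ ‖ω σ‖ ^ 2 := by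
        nlinarith [norm_nonneg (rinner (ω σ) (k σ) • k σ), norm_nonneg (ω σ)]
      have hy2 : ‖ω σ - rinner (ω σ) (k σ) • k σ‖ ^ 2 ≤ 4 * ‖ω σ‖ ^ 2 := by
        nlinarith [norm_nonneg (ω σ - rinner (ω σ) (k σ) • k σ), norm_nonneg (ω σ)]
      have hsum1 : c₁ * ‖rinner (ω σ) (k σ) • k σ‖ ^ 2
            + c₂ * ‖ω σ - rinner (ω σ) (k σ) • k σ‖ ^ 2 ≤ (c₁ + 4 * c₂) * ‖ω σ‖ ^ 2 := by
        nlinarith [hx2, hy2]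
      calc wf σ * (c₁ * ‖rinner (ω σ) (k σ) • k σ‖ ^ 2
            + c₂ * ‖ω σ - rinner (ω σ) (k σ) • k σ‖ ^ 2)
          ≤ Real.exp (β * t) * ((c₁ + 4 * c₂) * ‖ω σ‖ ^ 2) := by
            refine mul_le_mul h1.2 hsum1 ?_ (Real.exp_pos _).le
            positivity
        _ = Real.exp (β * t) * (c₁ + 4 * c₂) * ‖ω σ‖ ^ 2 := by ring
  -- integrability of the constraint integrand
  have hvec_int : ∀ ω : ℝ → E3, MemLp ω 2 (volume.restrict (Icc (0:ℝ) s')) →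
      Integrable (fun σ => e₁ σ • cross (ω σ) (pf σ)) (volume.restrict (Ioc (0:ℝ) s')) := by
    intro ω hω
    have hωO := hω.mono_measure hle
    have hg : Integrable (fun σ => (4 * (2 * CP)) * ‖ω σ‖) (volume.restrict (Ioc (0:ℝ) s')) :=
      (memLp_one_iff_integrable.mp (hωO.norm.mono_exponent (by norm_num))).const_mul _
    refine hg.mono' ?_ ?_
    · exact (he₁c.aestronglyMeasurable).smul
        (aesm_cross hωO.aestronglyMeasurable hpm.aestronglyMeasurable)
    · filter_upwards [ae_restrict_mem measurableSet_Ioc] with σ hσ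
      have h1 : |e₁ σ| ≤ 1 :=
        abs_le.mpr ⟨by linarith [(he₁bd σ (hsub hσ)).1], (he₁bd σ (hsub hσ)).2⟩
      have h2 : ‖cross (ω σ) (pf σ)‖ ≤ 4 * ‖ω σ‖ * (2 * CP) := by
        refine (cross_norm_le _ _).trans ?_
        have := hpbd σ (hsub hσ)
        nlinarith [norm_nonneg (ω σ)]
      calc ‖e₁ σ • cross (ω σ) (pf σ)‖ = |e₁ σ| * ‖cross (ω σ) (pf σ)‖ := by
            rw [norm_smul, Real.norm_eq_abs]
        _ ≤ 1 * (4 * ‖ω σ‖ * (2 * CP)) :=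
            mul_le_mul h1 h2 (norm_nonneg _) zero_le_one
        _ = 4 * (2 * CP) * ‖ω σ‖ := by ring
  -- rewriting the constraint functional
  have hConL : ∀ ω : ℝ → E3, MemLp ω 2 (volume.restrict (Icc (0:ℝ) s')) →
      Con ω = (∫ σ in Ioc (0:ℝ) s', rinner (q σ) (ω σ)) + c := by
    intro ω hω
    rw [hCon ω, intervalIntegral.integral_of_le hs0.le]
    congr 1
    have hraw : (fun σ => (1 - Real.exp (-(α * (t - σ)))) • cross (ω σ) (P s' - P σ))
        = fun σ => e₁ σ • cross (ω σ) (pf σ) := by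
      funext σ; simp only [he₁, hpf]
    rw [hraw]
    calc rinner n (∫ σ in Ioc (0:ℝ) s', e₁ σ • cross (ω σ) (pf σ))
        = ∫ σ in Ioc (0:ℝ) s', rinner n (e₁ σ • cross (ω σ) (pf σ)) :=
          ((innerSL ℝ n).integral_comp_comm (hvec_int ω hω)).symm
      _ = ∫ σ in Ioc (0:ℝ) s', rinner (q σ) (ω σ) := by
          refine integral_congr_ae (Filter.Eventually.of_forall fun σ => ?_)
          show rinner n (e₁ σ • cross (ω σ) (pf σ)) = rinner (q σ) (ω σ)
          rw [hqdef]
          show rinner n (e₁ σ • cross (ω σ) (pf σ)) = rinner (e₁ σ • cross (pf σ) n) (ω σ)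
          rw [rinner_smul_left']
          rw [show rinner n (e₁ σ • cross (ω σ) (pf σ)) = e₁ σ * rinner n (cross (ω σ) (pf σ))
            from real_inner_smul_right n _ (e₁ σ)]
          rw [triple_cyc, rinner_comm]
  -- rewriting the energy
  have hEnL : ∀ ω : ℝ → E3, En ω = (1/2) * ∫ σ in Ioc (0:ℝ) s', fI ω σ := by
    intro ω
    rw [hEn ω, intervalIntegral.integral_of_le hs0.le]
  -- linearity pieces
  have hBq_int : ∀ ω η : ℝ → E3, MemLp ω 2 (volume.restrict (Icc (0:ℝ) s')) →
      MemLp η 2 (volume.restrict (Icc (0:ℝ) s')) →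
      Integrable (fun σ => rinner (G ω σ) (η σ)) (volume.restrict (Ioc (0:ℝ) s')) :=
    fun ω η hω hη =>
      inner_integrable' ((hG2I ω hω).mono_measure hle) (hη.mono_measure hle)
  have hq_int : ∀ η : ℝ → E3, MemLp η 2 (volume.restrict (Icc (0:ℝ) s')) →
      Integrable (fun σ => rinner (q σ) (η σ)) (volume.restrict (Ioc (0:ℝ) s')) :=
    fun η hη => inner_integrable' (hq2I.mono_measure hle) (hη.mono_measure hle)
  -- quadratic expansion of the energy
  have hExpand : ∀ η : ℝ → E3, MemLp η 2 (volume.restrict (Icc (0:ℝ) s')) → ∀ ε : ℝ,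
      En (fun σ => ωbar σ + ε • η σ)
        = En ωbar + ε * (∫ σ in Ioc (0:ℝ) s', rinner (G ωbar σ) (η σ)) + ε ^ 2 * En η := by
    intro η hη ε
    rw [hEnL (fun σ => ωbar σ + ε • η σ), hEnL ωbar, hEnL η]
    have hpt : ∀ᵐ σ ∂(volume.restrict (Ioc (0:ℝ) s')),
        fI (fun σ => ωbar σ + ε • η σ) σ
          = fI ωbar σ + ε * (2 * rinner (G ωbar σ) (η σ)) + ε ^ 2 * fI η σ := by
      filter_upwards [hkO] with σ hks
      simp only [hfIdef, hGdef]
      exact expand_pt c₁ c₂ (wf σ) ε (k σ) (ωbar σ) (η σ) hks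
    rw [integral_congr_ae hpt]
    have i1 : Integrable (fI ωbar) (volume.restrict (Ioc (0:ℝ) s')) := hfI_int ωbar hωbar
    have i2 : Integrable (fun σ => ε * (2 * rinner (G ωbar σ) (η σ)))
        (volume.restrict (Ioc (0:ℝ) s')) :=
      ((hBq_int ωbar η hωbar hη).const_mul 2).const_mul ε
    have i3 : Integrable (fun σ => ε ^ 2 * fI η σ) (volume.restrict (Ioc (0:ℝ) s')) :=
      (hfI_int η hη).const_mul _
    have i12 : Integrable (fun σ => fI ωbar σ + ε * (2 * rinner (G ωbar σ) (η σ)))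
        (volume.restrict (Ioc (0:ℝ) s')) := i1.add i2
    rw [integral_add i12 i3, integral_add i1 i2, integral_const_mul, integral_const_mul,
      integral_const_mul]
    ring
  -- linearity of the constraint integral
  have hLlin : ∀ (ω η : ℝ → E3) (d : ℝ), MemLp ω 2 (volume.restrict (Icc (0:ℝ) s')) →
      MemLp η 2 (volume.restrict (Icc (0:ℝ) s')) →
      (∫ σ in Ioc (0:ℝ) s', rinner (q σ) (ω σ + d • η σ))
        = (∫ σ in Ioc (0:ℝ) s', rinner (q σ) (ω σ))
          + d * ∫ σ in Ioc (0:ℝ) s', rinner (q σ) (η σ) := by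
    intro ω η d hω hη
    rw [show (fun σ => rinner (q σ) (ω σ + d • η σ))
        = fun σ => rinner (q σ) (ω σ) + d * rinner (q σ) (η σ) from funext fun σ => by
      simp only [rinner, inner_add_right, real_inner_smul_right]]
    rw [integral_add (hq_int ω hω) ((hq_int η hη).const_mul d), integral_const_mul]
  -- feasibility of perturbations
  have hfeas' : (∫ σ in Ioc (0:ℝ) s', rinner (q σ) (ωbar σ)) + c = 0 := by
    rw [← hConL ωbar hωbar]; exact hfeas
  have hConpert : ∀ η : ℝ → E3, MemLp η 2 (volume.restrict (Icc (0:ℝ) s')) →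
      (∫ σ in Ioc (0:ℝ) s', rinner (q σ) (η σ)) = 0 → ∀ ε : ℝ,
      Con (fun σ => ωbar σ + ε • η σ) = 0 := by
    intro η hη hL ε
    have hsum : MemLp (fun σ => ωbar σ + ε • η σ) 2 (volume.restrict (Icc (0:ℝ) s')) :=
      hωbar.add (hη.const_smul ε)
    rw [hConL _ hsum, hLlin ωbar η ε hωbar hη, hL, mul_zero, add_zero]
    exact hfeas'
  -- nonnegativity of the energy
  have hEnpos : ∀ η : ℝ → E3, MemLp η 2 (volume.restrict (Icc (0:ℝ) s')) → 0 ≤ En η := by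
    intro η hη
    rw [hEnL η]
    have h0 : 0 ≤ ∫ σ in Ioc (0:ℝ) s', fI η σ := by
      refine integral_nonneg_of_ae ?_
      filter_upwards [ae_restrict_mem measurableSet_Ioc] with σ hσ
      rw [hfIdef]
      exact mul_nonneg (hwf_bd σ (hsub hσ)).1 (by positivity)
    linarith
  -- vanishing of the bilinear form on the constraint kernel
  have hB0 : ∀ η : ℝ → E3, MemLp η 2 (volume.restrict (Icc (0:ℝ) s')) →
      (∫ σ in Ioc (0:ℝ) s', rinner (q σ) (η σ)) = 0 →
      (∫ σ in Ioc (0:ℝ) s', rinner (G ωbar σ) (η σ)) = 0 := by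
    intro η hη hL
    refine zero_of_quad _ (En η) (hEnpos η hη) fun ε => ?_
    have h1 := hmin (fun σ => ωbar σ + ε • η σ) (hωbar.add (hη.const_smul ε))
      (hConpert η hη hL ε)
    rw [hExpand η hη ε] at h1
    linarith
  -- the Lagrange multiplier
  obtain ⟨ω₀, hω₀, hCon0⟩ := hnontriv
  have hL0 : (∫ σ in Ioc (0:ℝ) s', rinner (q σ) (ω₀ σ)) ≠ 0 := by
    intro h; exact hCon0 (by rw [hConL ω₀ hω₀, h, zero_add])
  set lam' := (∫ σ in Ioc (0:ℝ) s', rinner (G ωbar σ) (ω₀ σ))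
      / (∫ σ in Ioc (0:ℝ) s', rinner (q σ) (ω₀ σ)) with hlam'
  have hlin : ∀ η : ℝ → E3, MemLp η 2 (volume.restrict (Icc (0:ℝ) s')) →
      (∫ σ in Ioc (0:ℝ) s', rinner (G ωbar σ) (η σ))
        = lam' * ∫ σ in Ioc (0:ℝ) s', rinner (q σ) (η σ) := by
    intro η hη
    set d := (∫ σ in Ioc (0:ℝ) s', rinner (q σ) (η σ))
        / (∫ σ in Ioc (0:ℝ) s', rinner (q σ) (ω₀ σ)) with hd
    have hη' : MemLp (fun σ => η σ + (-d) • ω₀ σ) 2 (volume.restrict (Icc (0:ℝ) s')) :=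
      hη.add (hω₀.const_smul (-d))
    have hL' : (∫ σ in Ioc (0:ℝ) s', rinner (q σ) (η σ + (-d) • ω₀ σ)) = 0 := by
      rw [hLlin η ω₀ (-d) hη hω₀, hd]
      field_simp
      ring
    have hB' := hB0 _ hη' hL'
    have hBsub : (∫ σ in Ioc (0:ℝ) s', rinner (G ωbar σ) (η σ + (-d) • ω₀ σ))
        = (∫ σ in Ioc (0:ℝ) s', rinner (G ωbar σ) (η σ))
          + (-d) * ∫ σ in Ioc (0:ℝ) s', rinner (G ωbar σ) (ω₀ σ) := by
      rw [show (fun σ => rinner (G ωbar σ) (η σ + (-d) • ω₀ σ))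
          = fun σ => rinner (G ωbar σ) (η σ) + (-d) * rinner (G ωbar σ) (ω₀ σ) from
        funext fun σ => by simp only [rinner, inner_add_right, real_inner_smul_right]]
      rw [integral_add (hBq_int ωbar η hωbar hη)
        ((hBq_int ωbar ω₀ hωbar hω₀).const_mul (-d)), integral_const_mul]
    rw [hBsub] at hB'
    have h1 : (∫ σ in Ioc (0:ℝ) s', rinner (G ωbar σ) (η σ))
        = d * ∫ σ in Ioc (0:ℝ) s', rinner (G ωbar σ) (ω₀ σ) := by linarith
    rw [h1, hlam', hd]
    field_simp
  -- the Euler–Lagrange function vanishes a.e.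
  set F : ℝ → E3 := fun σ => G ωbar σ - lam' • q σ with hFdef
  have hF2I : MemLp F 2 (volume.restrict (Icc (0:ℝ) s')) :=
    (hG2I ωbar hωbar).sub (hq2I.const_smul lam')
  have hFdual : ∀ η : ℝ → E3, MemLp η 2 (volume.restrict (Icc (0:ℝ) s')) →
      (∫ σ in Ioc (0:ℝ) s', rinner (F σ) (η σ)) = 0 := by
    intro η hη
    have hsplit : (∫ σ in Ioc (0:ℝ) s', rinner (F σ) (η σ))
        = (∫ σ in Ioc (0:ℝ) s', rinner (G ωbar σ) (η σ))
          - lam' * ∫ σ in Ioc (0:ℝ) s', rinner (q σ) (η σ) := by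
      rw [show (fun σ => rinner (F σ) (η σ))
          = fun σ => rinner (G ωbar σ) (η σ) - lam' * rinner (q σ) (η σ) from
        funext fun σ => by simp only [hFdef, rinner, inner_sub_left, real_inner_smul_left]]
      rw [integral_sub (hBq_int ωbar η hωbar hη) ((hq_int η hη).const_mul lam'),
        integral_const_mul]
    rw [hsplit, hlin η hη]
    ring
  have hFF := hFdual F hF2I
  have hFint := inner_integrable' (hF2I.mono_measure hle) (hF2I.mono_measure hle)
  have hzero : (fun σ => rinner (F σ) (F σ)) =ᵐ[volume.restrict (Ioc (0:ℝ) s')] 0 :=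
    (integral_eq_zero_iff_of_nonneg_ae
      (Filter.Eventually.of_forall fun σ => real_inner_self_nonneg) hFint).mp hFF
  have hF0 : ∀ᵐ σ : ℝ, σ ∈ Ioc (0:ℝ) s' → F σ = 0 := by
    have h := (ae_restrict_iff' measurableSet_Ioc).mp hzero
    filter_upwards [h] with σ hσ hmem
    have h2 : rinner (F σ) (F σ) = 0 := hσ hmem
    exact inner_self_eq_zero.mp h2
  -- conclusion
  refine ⟨-lam', ?_⟩
  filter_upwards [hk, hF0] with σ hkσ hFσ hσIoo
  obtain ⟨hσ0, hσs⟩ := hσIoo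
  have hσIcc : σ ∈ Icc (0:ℝ) s' := ⟨hσ0.le, hσs.le⟩
  have hks := hkσ hσIcc
  have hFz := hFσ ⟨hσ0, hσs.le⟩
  have hkk : rinner (k σ) (k σ) = 1 := by rw [rinner_self, hks]; norm_num
  have hτ : 0 < t - σ := by linarith
  have he₁pos : 0 < e₁ σ := by
    simp only [he₁]
    have : Real.exp (-(α * (t - σ))) < 1 := Real.exp_lt_one_iff.mpr (by nlinarith)
    linarith
  have hwpos : 0 < wf σ := by
    simp only [hwf]
    have := Real.exp_pos (β * (t - σ))
    simp only [he₁] at he₁pos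
    nlinarith
  have hEprod : Real.exp (β * (t - σ)) * Real.exp (-(β * (t - σ))) = 1 := by
    rw [← Real.exp_add]; simp
  set v : E3 := cross n (P s' - P σ) with hv
  set A : ℝ := rinner (ωbar σ) (k σ) with hA
  set Ex : ℝ := Real.exp (-(β * (t - σ))) with hEx
  set μc : ℝ := (-lam') * Ex with hμc
  -- derive the pointwise Euler–Lagrange equation
  have heq0 : G ωbar σ = lam' • q σ := by
    have := hFz
    simp only [hFdef] at this
    rwa [sub_eq_zero] at this
  have hcr : cross (pf σ) n = -v := by
    rw [hv, hpf]; exact cross_swap _ _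
  have heq1 : wf σ • (c₂ • ωbar σ + ((c₁ - c₂) * A) • k σ) = wf σ • (μc • v) := by
    rw [hA]
    have : G ωbar σ = wf σ • (c₂ • ωbar σ + ((c₁ - c₂) * rinner (ωbar σ) (k σ)) • k σ) := by
      rw [hGdef]
    rw [← this, heq0]
    simp only [hqdef]
    rw [hcr]
    have he₁E : e₁ σ = wf σ * Ex := by
      simp only [hwf, hEx, he₁]
      show (1 - Real.exp (-(α * (t - σ))))
        = (1 - Real.exp (-(α * (t - σ)))) * Real.exp (β * (t - σ)) * Real.exp (-(β * (t - σ)))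
      rw [mul_assoc, hEprod, mul_one]
    rw [smul_neg, smul_neg, smul_smul, smul_smul, ← neg_smul, he₁E, hμc]
    congr 1
    ring
  have heq : c₂ • ωbar σ + ((c₁ - c₂) * A) • k σ = μc • v :=
    smul_right_injective E3 (ne_of_gt hwpos) heq1
  have hAv : c₁ * A = μc * rinner v (k σ) := by
    have h := congrArg (fun x : E3 => rinner x (k σ)) heq
    simp only [rinner_add_left', rinner_smul_left'] at h
    rw [hkk] at h
    rw [← hA] at h
    linarith [h]
  constructor
  · rw [smul_smul, smul_smul]
    congr 1
    have hc₁ne : c₁ ≠ 0 := ne_of_gt hc₁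
    rw [hμc] at hAv
    field_simp at hAv ⊢
    linarith
  · have hωex : ωbar σ = (c₂⁻¹ * μc) • v + (-(c₂⁻¹ * ((c₁ - c₂) * A))) • k σ := by
      have h2 : c₂ • ωbar σ = μc • v + (-((c₁ - c₂) * A)) • k σ := by
        rw [neg_smul, ← sub_eq_add_neg]
        exact eq_sub_of_add_eq heq
      calc ωbar σ = c₂⁻¹ • (c₂ • ωbar σ) := by
            rw [smul_smul, inv_mul_cancel₀ (ne_of_gt hc₂), one_smul]
        _ = _ := by rw [h2, smul_add, smul_smul, smul_smul, mul_neg]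
    rw [hωex]
    match_scalars
    · rw [hμc]
      field_simp
    · rw [hμc] at hAv
      field_simp at hAv ⊢
      linarith
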